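/- arXiv:2010.10461 — 3 statements merged into one kernel-verified Lean document; each statement's English description precedes it below -/
import Mathlib

section
/- Let N ≥ 1, let Ω ⊆ {0,…,N−1}, let M ∈ ℂ^{M×N}, and let x* = ∑_{k=1}^p c_k a(τ_k) with p ≥ 1, amplitudes c_k > 0 and pairwise distinct τ_1,…,τ_p ∈ [0,1). Suppose there exist q ∈ ℂ^N and finitely many vectors u_1,…,u_m ∈ ℂ^M such that, writing Q(τ) = ∑_{n=0}^{N−1} q_n e^{−2πinτ} and P_i(τ) = ∑_{n=0}^{N−1} (M^H u_i)_n e^{−2πinτ}: (i) Re(Q(τ_k)) = 1 for k = 1,…,p; (ii) q_j = 0 for every j ∉ Ω; (iii) 1 − Re(Q(τ)) = ∑_{i=1}^m |P_i(τ)|² for all τ ∈ [0,1). Then x* is a minimizer of the compressed ANM program: for every x ∈ ℂ^N with x_j = x*_j for all j ∈ Ω and M T(x) M^H positive semidefinite, one has Re(x_0) ≥ Re(x*_0) = ∑_{k=1}^p c_k. -/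
open Complex Matrix BigOperators
open scoped ComplexOrder

/-- The complex exponential atom `a(τ) ∈ ℂ^N`, with `a(τ)ₙ = exp(2πinτ)`. -/
noncomputable def atom (N : ℕ) (τ : ℝ) : Fin N → ℂ :=
  fun n => Complex.exp (2 * Real.pi * Complex.I * (n : ℕ) * τ)

/-- The trigonometric polynomial `τ ↦ ∑ₙ qₙ exp(−2πinτ)` with coefficients `q ∈ ℂ^N`. -/
noncomputable def trigPoly {N : ℕ} (q : Fin N → ℂ) (τ : ℝ) : ℂ :=
  ∑ n : Fin N, q n * Complex.exp (-(2 * Real.pi * Complex.I * (n : ℕ) * τ))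

/-- The Hermitian Toeplitz matrix `T(x)` whose first column is `x`. -/
noncomputable def Toep {N : ℕ} (x : Fin N → ℂ) : Matrix (Fin N) (Fin N) ℂ :=
  fun m n =>
    if (n : ℕ) ≤ (m : ℕ) then
      x ⟨(m : ℕ) - (n : ℕ), Nat.lt_of_le_of_lt (Nat.sub_le _ _) m.isLt⟩
    else
      star (x ⟨(n : ℕ) - (m : ℕ), Nat.lt_of_le_of_lt (Nat.sub_le _ _) n.isLt⟩)

noncomputable def ee (r : ℝ) : ℂ := Complex.exp (2 * Real.pi * Complex.I * r)

lemma ee_add (a b : ℝ) : ee (a + b) = ee a * ee b := by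
  rw [ee, ee, ee, ← Complex.exp_add]; congr 1; push_cast; ring

lemma ee_zero : ee 0 = 1 := by simp [ee]

lemma ee_conj (a : ℝ) : (starRingEnd ℂ) (ee a) = ee (-a) := by
  rw [ee, ee, ← Complex.exp_conj]
  have : (starRingEnd ℂ) (2 * (Real.pi:ℂ) * Complex.I * (a:ℝ)) =
      2 * (Real.pi:ℂ) * Complex.I * ((-a : ℝ):ℂ) := by
    simp only [_root_.map_mul, Complex.conj_I, Complex.conj_ofReal, map_ofNat]
    push_cast; ring
  rw [this]

lemma ee_int (k : ℤ) : ee k = 1 := by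
  rw [ee]
  have : (2 * (Real.pi:ℂ) * Complex.I * (k:ℝ)) = (k:ℤ) * (2 * Real.pi * Complex.I) := by
    push_cast; ring
  rw [this, Complex.exp_int_mul_two_pi_mul_I]

lemma ee_sum (L : ℕ) (hL : 0 < L) (k : ℤ) (h1 : -(L:ℤ) < k) (h2 : k < L) :
    ∑ j : Fin L, ee ((k:ℝ) * (j:ℕ) / L) = if k = 0 then (L:ℂ) else 0 := by
  by_cases hk : k = 0
  · subst hk; simp [ee_zero]
  · rw [if_neg hk]
    have hLR : (L:ℝ) ≠ 0 := Nat.cast_ne_zero.mpr hL.ne'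
    have hpow : ∀ j : ℕ, ee ((k:ℝ) * j / L) = ee ((k:ℝ)/L) ^ j := by
      intro j
      rw [ee, ee, ← Complex.exp_nat_mul]; congr 1; push_cast; ring
    have hne : ee ((k:ℝ)/L) ≠ 1 := by
      intro h
      rw [ee, Complex.exp_eq_one_iff] at h
      obtain ⟨n, hn⟩ := h
      have h2pi : (2 * (Real.pi:ℂ) * Complex.I) ≠ 0 := by
        simp [Real.pi_ne_zero, Complex.I_ne_zero]
      have hkL : ((k:ℝ)/L : ℝ) = (n:ℝ) := by
        have : ((( (k:ℝ)/L : ℝ)):ℂ) = (n:ℂ) := by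
          have h' : (2 * (Real.pi:ℂ) * Complex.I) * ((((k:ℝ)/L : ℝ)):ℂ) =
              (2 * (Real.pi:ℂ) * Complex.I) * (n:ℂ) := by
            linear_combination hn
          exact mul_left_cancel₀ h2pi h'
        exact_mod_cast this
      have hk2 : (k:ℝ) = n * L := by field_simp at hkL; linarith [hkL]
      have hk3 : k = n * L := by exact_mod_cast hk2
      have hn1 : n < 1 := by nlinarith [hk3, h2]
      have hn2 : -1 < n := by nlinarith [hk3, h1]
      have : n = 0 := by omega
      simp [this] at hk3; exact hk hk3
    have : ∑ j : Fin L, ee ((k:ℝ) * (j:ℕ) / L) = ∑ j ∈ Finset.range L, ee ((k:ℝ)/L) ^ j := by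
      rw [Fin.sum_univ_eq_sum_range (fun j => ee ((k:ℝ) * j / L))]
      exact Finset.sum_congr rfl fun j _ => hpow j
    rw [this, geom_sum_eq hne]
    have : ee ((k:ℝ)/L) ^ L = 1 := by
      rw [← hpow L]
      have : (k:ℝ) * L / L = (k:ℤ) := by field_simp
      rw [this, ee_int]
    rw [this]; simp


lemma trig_eval {N : ℕ} (v : Fin N → ℂ) (t : ℝ) :
    trigPoly v t = ∑ n : Fin N, v n * ee (-((n:ℕ) * t)) := by
  unfold trigPoly ee
  refine Finset.sum_congr rfl fun n _ => ?_
  congr 1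
  congr 1
  push_cast; ring


def pairsd (N : ℕ) (d : Fin N) : Finset (Fin N × Fin N) :=
  Finset.univ.filter (fun p => (p.1 : ℕ) = (p.2 : ℕ) + (d : ℕ))


lemma keyA {N : ℕ} (L : ℕ) (hLdef : L = 2*N-1) (hN : 0 < N) (v : Fin N → ℂ) (d : Fin N) :
    ∑ j : Fin L, ((‖trigPoly v ((j:ℕ)/(L : ℝ))‖)^2 : ℂ)
        * ee ((d:ℕ) * (j:ℕ) / (L:ℝ))
    = (L:ℂ) * ∑ p ∈ pairsd N d, v p.1 * (starRingEnd ℂ) (v p.2) := by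
  have hL : 0 < L := by omega
  -- rewrite each term as a double sum
  have hterm : ∀ j : Fin L,
      ((‖trigPoly v ((j:ℕ)/(L : ℝ))‖)^2 : ℂ) * ee ((d:ℕ) * (j:ℕ) / (L:ℝ))
      = ∑ b : Fin N, ∑ a : Fin N, v b * (starRingEnd ℂ) (v a) *
          ee ((((a:ℕ):ℤ) - (b:ℕ) + (d:ℕ) : ℤ) * (j:ℕ) / (L:ℝ)) := by
    intro j
    set t : ℝ := (j:ℕ)/(L:ℝ) with ht
    have h1 : ((‖trigPoly v t‖):ℂ)^2
        = trigPoly v t * (starRingEnd ℂ) (trigPoly v t) := by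
      rw [show ((‖trigPoly v t‖):ℂ)^2
          = (((‖trigPoly v t‖)^2 : ℝ):ℂ) by push_cast; ring,
        Complex.sq_norm, Complex.mul_conj]
    rw [show ((‖trigPoly v t‖):ℂ)^2 * ee ((d:ℕ) * (j:ℕ) / (L:ℝ))
        = (trigPoly v t * (starRingEnd ℂ) (trigPoly v t)) * ee ((d:ℕ) * (j:ℕ) / (L:ℝ)) by
          rw [h1]]
    rw [trig_eval, map_sum, Finset.sum_mul_sum, Finset.sum_mul]
    refine Finset.sum_congr rfl fun b _ => ?_
    rw [Finset.sum_mul]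
    refine Finset.sum_congr rfl fun a _ => ?_
    rw [_root_.map_mul, ee_conj, neg_neg]
    have harg : (-((b:ℕ) * t) + ((a:ℕ)*t + (d:ℕ)*(j:ℕ)/(L:ℝ)))
        = (((a:ℕ):ℤ) - (b:ℕ) + (d:ℕ) : ℤ) * (j:ℕ) / (L:ℝ) := by
      rw [ht]; push_cast; ring
    have hee : ee (-((b:ℕ) * t)) * (ee ((a:ℕ)*t) * ee ((d:ℕ)*(j:ℕ)/(L:ℝ)))
        = ee ((((a:ℕ):ℤ) - (b:ℕ) + (d:ℕ) : ℤ) * (j:ℕ) / (L:ℝ)) := by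
      rw [← ee_add, ← ee_add, harg]
    rw [← hee]; ring
  rw [Finset.sum_congr rfl fun j _ => hterm j]
  rw [Finset.sum_comm]
  have key : ∀ b : Fin N, ∑ j : Fin L, ∑ a : Fin N, v b * (starRingEnd ℂ) (v a) *
          ee ((((a:ℕ):ℤ) - (b:ℕ) + (d:ℕ) : ℤ) * (j:ℕ) / (L:ℝ))
      = ∑ a : Fin N, (if ((b:ℕ) : ℤ) = (a:ℕ) + (d:ℕ) then (L:ℂ) else 0) *
          (v b * (starRingEnd ℂ) (v a)) := by
    intro b
    rw [Finset.sum_comm]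
    refine Finset.sum_congr rfl fun a _ => ?_
    rw [← Finset.mul_sum]
    set k : ℤ := ((a:ℕ):ℤ) - (b:ℕ) + (d:ℕ) with hk
    have hsum : ∑ j : Fin L, ee ((k:ℝ) * (j:ℕ) / (L:ℝ)) = if k = 0 then (L:ℂ) else 0 := by
      apply ee_sum L hL k
      · have := a.isLt; have := b.isLt; have := d.isLt; omega
      · have := a.isLt; have := b.isLt; have := d.isLt; omega
    have hcast : ∀ j : Fin L, ee ((k:ℝ) * (j:ℕ) / (L:ℝ))
        = ee (((((a:ℕ):ℤ) - (b:ℕ) + (d:ℕ) : ℤ)) * (j:ℕ) / (L:ℝ)) := by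
      intro j; rw [hk]
    rw [Finset.sum_congr rfl fun j _ => (hcast j).symm, hsum]
    by_cases hbz : ((b:ℕ):ℤ) = ((a:ℕ):ℤ) + ((d:ℕ):ℤ)
    · rw [if_pos hbz, if_pos (show k = 0 by omega)]; ring
    · rw [if_neg hbz, if_neg (show ¬ k = 0 by omega)]; ring
  rw [Finset.sum_congr rfl fun b _ => key b]
  rw [Finset.mul_sum, pairsd, Finset.sum_filter, Fintype.sum_prod_type]
  refine Finset.sum_congr rfl fun b _ => Finset.sum_congr rfl fun a _ => ?_
  by_cases h : (b:ℕ) = (a:ℕ) + (d:ℕ)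
  · have h' : ((b:ℕ):ℤ) = (a:ℕ) + (d:ℕ) := by exact_mod_cast h
    rw [if_pos h', if_pos h]
  · have h' : ¬ (((b:ℕ):ℤ) = (a:ℕ) + (d:ℕ)) := by exact_mod_cast h
    rw [if_neg h', if_neg h]; ring


lemma keyB {N : ℕ} (L : ℕ) (hLdef : L = 2*N-1) (hN : 0 < N) (q : Fin N → ℂ) (d : Fin N) :
    ∑ j : Fin L, ((1 - (trigPoly q ((j:ℕ)/(L:ℝ))).re : ℝ) : ℂ) * ee ((d:ℕ)*(j:ℕ)/(L:ℝ))
    = (if (d:ℕ) = 0 then (L:ℂ) else 0) - (L:ℂ)/2 * q d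
      - (if (d:ℕ) = 0 then (L:ℂ)/2 * (starRingEnd ℂ) (q d) else 0) := by
  have hL : 0 < L := by omega
  have bound : ∀ n : Fin N, (n:ℕ) < N := fun n => n.isLt
  have hdN := d.isLt
  have hterm : ∀ j : Fin L,
      ((1 - (trigPoly q ((j:ℕ)/(L:ℝ))).re : ℝ) : ℂ) * ee ((d:ℕ)*(j:ℕ)/(L:ℝ))
      = ee ((((d:ℕ):ℤ) : ℤ) * (j:ℕ) / (L:ℝ))
        - (∑ n : Fin N, (q n / 2) * ee ((((d:ℕ):ℤ) - ((n:ℕ):ℤ) : ℤ) * (j:ℕ) / (L:ℝ)))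
        - (∑ n : Fin N, ((starRingEnd ℂ) (q n) / 2) *
            ee ((((n:ℕ):ℤ) + ((d:ℕ):ℤ) : ℤ) * (j:ℕ) / (L:ℝ))) := by
    intro j
    set t : ℝ := (j:ℕ)/(L:ℝ) with ht
    have hre : (((trigPoly q t).re : ℝ) : ℂ)
        = (trigPoly q t + (starRingEnd ℂ) (trigPoly q t)) / 2 := by
      rw [Complex.add_conj]; push_cast; ring
    have hcast : ((1 - (trigPoly q t).re : ℝ) : ℂ)
        = 1 - (trigPoly q t + (starRingEnd ℂ) (trigPoly q t)) / 2 := by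
      push_cast [← hre]; ring
    have hE : ee ((d:ℕ)*t) = ee ((((d:ℕ):ℤ) : ℤ) * (j:ℕ) / (L:ℝ)) := by
      congr 1; rw [ht]; push_cast; ring
    have hA : (∑ n : Fin N, q n * ee (-((n:ℕ) * t))) * ee ((d:ℕ)*t) / 2
        = ∑ n : Fin N, (q n / 2) * ee ((((d:ℕ):ℤ) - ((n:ℕ):ℤ) : ℤ) * (j:ℕ) / (L:ℝ)) := by
      rw [Finset.sum_mul, Finset.sum_div]
      refine Finset.sum_congr rfl fun n _ => ?_
      rw [mul_assoc, ← ee_add]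
      rw [show (-((n:ℕ) * t) + (d:ℕ)*t)
          = ((((d:ℕ):ℤ) - ((n:ℕ):ℤ) : ℤ):ℝ) * (j:ℕ) / (L:ℝ) by rw [ht]; push_cast; ring]
      ring
    have hB : (∑ n : Fin N, (starRingEnd ℂ) (q n * ee (-((n:ℕ) * t)))) * ee ((d:ℕ)*t) / 2
        = ∑ n : Fin N, ((starRingEnd ℂ) (q n) / 2) *
            ee ((((n:ℕ):ℤ) + ((d:ℕ):ℤ) : ℤ) * (j:ℕ) / (L:ℝ)) := by
      rw [Finset.sum_mul, Finset.sum_div]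
      refine Finset.sum_congr rfl fun n _ => ?_
      rw [_root_.map_mul, ee_conj, neg_neg, mul_assoc, ← ee_add]
      rw [show ((n:ℕ) * t + (d:ℕ)*t)
          = ((((n:ℕ):ℤ) + ((d:ℕ):ℤ) : ℤ):ℝ) * (j:ℕ) / (L:ℝ) by rw [ht]; push_cast; ring]
      ring
    rw [show ee ((d:ℕ)*(j:ℕ)/(L:ℝ)) = ee ((d:ℕ)*t) by rw [ht]; congr 1; ring]
    rw [hcast, trig_eval, map_sum, ← hE, ← hA, ← hB]
    ring
  rw [Finset.sum_congr rfl fun j _ => hterm j]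
  rw [Finset.sum_sub_distrib, Finset.sum_sub_distrib]
  have hS1 : ∑ j : Fin L, ee ((((d:ℕ):ℤ) : ℤ) * (j:ℕ) / (L:ℝ))
      = if (d:ℕ) = 0 then (L:ℂ) else 0 := by
    rw [ee_sum L hL ((d:ℕ):ℤ) (by omega) (by omega)]
    by_cases hd : (d:ℕ) = 0
    · rw [if_pos hd, if_pos (by exact_mod_cast hd)]
    · rw [if_neg (show ¬ (((d:ℕ):ℤ) = 0) by exact_mod_cast hd), if_neg hd]
  have hS2 : ∑ j : Fin L, ∑ n : Fin N,
        (q n / 2) * ee ((((d:ℕ):ℤ) - ((n:ℕ):ℤ) : ℤ) * (j:ℕ) / (L:ℝ))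
      = (L:ℂ)/2 * q d := by
    rw [Finset.sum_comm]
    have h2 : ∀ n : Fin N, ∑ j : Fin L,
        (q n / 2) * ee ((((d:ℕ):ℤ) - ((n:ℕ):ℤ) : ℤ) * (j:ℕ) / (L:ℝ))
        = if n = d then (L:ℂ)/2 * q n else 0 := by
      intro n
      rw [← Finset.mul_sum,
        ee_sum L hL (((d:ℕ):ℤ) - ((n:ℕ):ℤ)) (by have := bound n; omega) (by have := bound n; omega)]
      by_cases hnd : n = d
      · rw [if_pos (show ((d:ℕ):ℤ) - ((n:ℕ):ℤ) = 0 by rw [hnd]; ring), if_pos hnd]; ring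
      · rw [if_neg (show ¬ (((d:ℕ):ℤ) - ((n:ℕ):ℤ) = 0) by
          intro h; exact hnd (Fin.ext (by omega))), if_neg hnd]
        ring
    rw [Finset.sum_congr rfl fun n _ => h2 n, Finset.sum_ite_eq' Finset.univ d
      (fun n => (L:ℂ)/2 * q n), if_pos (Finset.mem_univ d)]
  have hS3 : ∑ j : Fin L, ∑ n : Fin N, ((starRingEnd ℂ) (q n) / 2) *
        ee ((((n:ℕ):ℤ) + ((d:ℕ):ℤ) : ℤ) * (j:ℕ) / (L:ℝ))
      = if (d:ℕ) = 0 then (L:ℂ)/2 * (starRingEnd ℂ) (q d) else 0 := by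
    rw [Finset.sum_comm]
    have h3 : ∀ n : Fin N, ∑ j : Fin L,
        ((starRingEnd ℂ) (q n) / 2) * ee ((((n:ℕ):ℤ) + ((d:ℕ):ℤ) : ℤ) * (j:ℕ) / (L:ℝ))
        = if n = d ∧ (d:ℕ) = 0 then (L:ℂ)/2 * (starRingEnd ℂ) (q n) else 0 := by
      intro n
      rw [← Finset.mul_sum,
        ee_sum L hL (((n:ℕ):ℤ) + ((d:ℕ):ℤ)) (by have := bound n; omega) (by have := bound n; omega)]
      by_cases hnd : n = d ∧ (d:ℕ) = 0
      · rw [if_pos (show ((n:ℕ):ℤ) + ((d:ℕ):ℤ) = 0 by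
          have : (n:ℕ) = (d:ℕ) := by rw [hnd.1]
          omega), if_pos hnd]
        ring
      · rw [if_neg (show ¬ (((n:ℕ):ℤ) + ((d:ℕ):ℤ) = 0) by
          intro h
          exact hnd ⟨Fin.ext (by omega), by omega⟩), if_neg hnd]
        ring
    rw [Finset.sum_congr rfl fun n _ => h3 n]
    by_cases hd : (d:ℕ) = 0
    · rw [if_pos hd]
      rw [show (fun n : Fin N => if n = d ∧ (d:ℕ) = 0
            then (L:ℂ)/2 * (starRingEnd ℂ) (q n) else 0)
          = fun n : Fin N => if n = d then (L:ℂ)/2 * (starRingEnd ℂ) (q n) else 0 by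
        funext n
        by_cases hn : n = d
        · rw [if_pos ⟨hn, hd⟩, if_pos hn]
        · rw [if_neg (by rintro ⟨h, -⟩; exact hn h), if_neg hn]]
      rw [Finset.sum_ite_eq' Finset.univ d
        (fun n => (L:ℂ)/2 * (starRingEnd ℂ) (q n)), if_pos (Finset.mem_univ d)]
    · rw [if_neg hd]
      rw [Finset.sum_congr rfl fun n _ => if_neg (by rintro ⟨-, h⟩; exact hd h)]
      simp
  rw [hS1, hS2, hS3]


lemma keyC {N : ℕ} (hN : 0 < N) (x v : Fin N → ℂ) :
    star v ⬝ᵥ (Toep x *ᵥ v)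
    = ∑ d : Fin N, x d * (∑ p ∈ pairsd N d, (starRingEnd ℂ) (v p.1) * v p.2)
      + (starRingEnd ℂ) (∑ d ∈ Finset.univ.filter (fun d : Fin N => (d:ℕ) ≠ 0),
          x d * (∑ p ∈ pairsd N d, (starRingEnd ℂ) (v p.1) * v p.2)) := by
  have expand : star v ⬝ᵥ (Toep x *ᵥ v)
      = ∑ p : Fin N × Fin N, (starRingEnd ℂ) (v p.1) * (Toep x p.1 p.2 * v p.2) := by
    rw [dotProduct, Fintype.sum_prod_type]
    refine Finset.sum_congr rfl fun m _ => ?_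
    rw [Matrix.mulVec, dotProduct, Finset.mul_sum]
    refine Finset.sum_congr rfl fun n _ => ?_
    simp [Complex.star_def]
  rw [expand]
  rw [← Finset.sum_filter_add_sum_filter_not Finset.univ
    (fun p : Fin N × Fin N => (p.2:ℕ) ≤ (p.1:ℕ))]
  congr 1
  · -- lower-triangular part
    rw [← Finset.sum_fiberwise_of_maps_to (g := fun p : Fin N × Fin N =>
        (⟨(p.1:ℕ) - (p.2:ℕ), Nat.lt_of_le_of_lt (Nat.sub_le _ _) p.1.isLt⟩ : Fin N))
        (fun p _ => Finset.mem_univ _)]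
    refine Finset.sum_congr rfl fun d _ => ?_
    have hset : (Finset.univ.filter (fun p : Fin N × Fin N => (p.2:ℕ) ≤ (p.1:ℕ))).filter
        (fun p : Fin N × Fin N => (⟨(p.1:ℕ) - (p.2:ℕ), Nat.lt_of_le_of_lt (Nat.sub_le _ _) p.1.isLt⟩ : Fin N) = d)
        = pairsd N d := by
      ext p
      simp only [pairsd, Finset.mem_filter, Finset.mem_univ, true_and, Fin.ext_iff]
      have := d.isLt
      constructor
      · rintro ⟨h1, h2⟩
        have h2' : (p.1:ℕ) - (p.2:ℕ) = (d:ℕ) := h2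
        omega
      · intro h
        refine ⟨by omega, ?_⟩
        show (p.1:ℕ) - (p.2:ℕ) = (d:ℕ)
        omega
    rw [hset, Finset.mul_sum]
    refine Finset.sum_congr rfl fun p hp => ?_
    have hp' : (p.1:ℕ) = (p.2:ℕ) + (d:ℕ) := by
      simpa [pairsd] using hp
    have hle : (p.2:ℕ) ≤ (p.1:ℕ) := by omega
    have hdd : (⟨(p.1:ℕ) - (p.2:ℕ), Nat.lt_of_le_of_lt (Nat.sub_le _ _) p.1.isLt⟩ : Fin N) = d :=
      Fin.ext (show (p.1:ℕ) - (p.2:ℕ) = (d:ℕ) by omega)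
    have hToep : Toep x p.1 p.2 = x d := by
      rw [Toep, if_pos hle, hdd]
    rw [hToep]; ring
  · -- strictly upper-triangular part
    rw [map_sum]
    have hswap : ∑ p ∈ (Finset.univ.filter
        (fun p : Fin N × Fin N => ¬ ((p.2:ℕ) ≤ (p.1:ℕ)))),
        (starRingEnd ℂ) (v p.1) * (Toep x p.1 p.2 * v p.2)
        = ∑ p ∈ (Finset.univ.filter
        (fun p : Fin N × Fin N => (p.2:ℕ) < (p.1:ℕ))),
        (starRingEnd ℂ) (v p.2) * (Toep x p.2 p.1 * v p.1) := by
      refine Finset.sum_equiv (Equiv.prodComm (Fin N) (Fin N)) ?_ ?_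
      · intro p
        simp only [Finset.mem_filter, Finset.mem_univ, true_and, Equiv.prodComm_apply,
          Prod.fst_swap, Prod.snd_swap]
        omega
      · intro p _
        rfl
    rw [hswap]
    rw [← Finset.sum_fiberwise_of_maps_to (g := fun p : Fin N × Fin N =>
        (⟨(p.1:ℕ) - (p.2:ℕ), Nat.lt_of_le_of_lt (Nat.sub_le _ _) p.1.isLt⟩ : Fin N))
        (fun p _ => Finset.mem_univ _)]
    rw [Finset.sum_filter]
    refine Finset.sum_congr rfl fun d _ => ?_
    by_cases hd : (d:ℕ) = 0
    · rw [if_neg (by simpa using hd)]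
      have hempty : (Finset.univ.filter (fun p : Fin N × Fin N => (p.2:ℕ) < (p.1:ℕ))).filter
          (fun p : Fin N × Fin N => (⟨(p.1:ℕ) - (p.2:ℕ), Nat.lt_of_le_of_lt (Nat.sub_le _ _) p.1.isLt⟩ : Fin N) = d)
          = ∅ := by
        ext p
        simp only [Finset.mem_filter, Finset.mem_univ, true_and, Fin.ext_iff,
          Finset.notMem_empty, iff_false]
        rintro ⟨h1, h2⟩
        have h2' : (p.1:ℕ) - (p.2:ℕ) = (d:ℕ) := h2
        omega
      rw [hempty, Finset.sum_empty]
    · rw [if_pos (by simpa using hd)]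
      have hset : (Finset.univ.filter (fun p : Fin N × Fin N => (p.2:ℕ) < (p.1:ℕ))).filter
          (fun p : Fin N × Fin N => (⟨(p.1:ℕ) - (p.2:ℕ), Nat.lt_of_le_of_lt (Nat.sub_le _ _) p.1.isLt⟩ : Fin N) = d)
          = pairsd N d := by
        ext p
        simp only [pairsd, Finset.mem_filter, Finset.mem_univ, true_and, Fin.ext_iff]
        have := d.isLt
        constructor
        · rintro ⟨h1, h2⟩
          have h2' : (p.1:ℕ) - (p.2:ℕ) = (d:ℕ) := h2
          omega
        · intro h
          refine ⟨by omega, ?_⟩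
          show (p.1:ℕ) - (p.2:ℕ) = (d:ℕ)
          omega
      rw [hset, _root_.map_mul, map_sum, Finset.mul_sum]
      refine Finset.sum_congr rfl fun p hp => ?_
      have hp' : (p.1:ℕ) = (p.2:ℕ) + (d:ℕ) := by
        simpa [pairsd] using hp
      have hlt : ¬ ((p.1:ℕ) ≤ (p.2:ℕ)) := by omega
      have hdd : (⟨(p.1:ℕ) - (p.2:ℕ), Nat.lt_of_le_of_lt (Nat.sub_le _ _) p.1.isLt⟩ : Fin N) = d :=
        Fin.ext (show (p.1:ℕ) - (p.2:ℕ) = (d:ℕ) by omega)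
      have hToep : Toep x p.2 p.1 = (starRingEnd ℂ) (x d) := by
        rw [Toep, if_neg hlt, hdd, Complex.star_def]
      rw [hToep]
      simp only [_root_.map_mul, Complex.conj_conj]
      ring


lemma re_real_mul (r : ℝ) (z : ℂ) : ((r:ℂ) * z).re = r * z.re := by
  simp [Complex.mul_re]


theorem dual_certificate_implies_minimizer
    (N M' p m : ℕ) (hN : 0 < N) (hp : 0 < p)
    (Ω : Finset (Fin N))
    (M : Matrix (Fin M') (Fin N) ℂ)
    (τ : Fin p → ℝ) (hτ : ∀ k, τ k ∈ Set.Ico (0 : ℝ) 1)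
    (hinj : Function.Injective τ)
    (c : Fin p → ℝ) (hc : ∀ k, 0 < c k)
    (xstar : Fin N → ℂ)
    (hx : xstar = ∑ k : Fin p, (c k : ℂ) • atom N (τ k))
    (q : Fin N → ℂ) (u : Fin m → Fin M' → ℂ)
    (h2 : ∀ k : Fin p, (trigPoly q (τ k)).re = 1)
    (h3 : ∀ j : Fin N, j ∉ Ω → q j = 0)
    (h4 : ∀ t ∈ Set.Ico (0 : ℝ) 1,
      1 - (trigPoly q t).re = ∑ i : Fin m, ‖trigPoly (Mᴴ *ᵥ u i) t‖ ^ 2) :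
    (∀ x : Fin N → ℂ,
      (∀ j ∈ Ω, x j = xstar j) →
      (M * Toep x * Mᴴ).PosSemidef →
      (xstar ⟨0, hN⟩).re ≤ (x ⟨0, hN⟩).re) ∧
    (xstar ⟨0, hN⟩).re = ∑ k : Fin p, c k := by
  set L : ℕ := 2*N-1 with hLdef
  have hL : 0 < L := by omega
  set z : Fin N := ⟨0, hN⟩ with hz
  -- values of xstar
  have hxd : ∀ d : Fin N, xstar d = ∑ k : Fin p, (c k : ℂ) * ee ((d:ℕ) * τ k) := by
    intro d
    rw [hx]
    rw [Finset.sum_apply]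
    refine Finset.sum_congr rfl fun k _ => ?_
    rw [Pi.smul_apply, smul_eq_mul]
    congr 1
    rw [atom, ee]
    congr 1
    push_cast
    ring
  have hx0 : xstar z = ((∑ k : Fin p, c k : ℝ) : ℂ) := by
    rw [hxd]
    push_cast
    refine Finset.sum_congr rfl fun k _ => ?_
    simp [hz, ee_zero]
  have hx0re : (xstar z).re = ∑ k : Fin p, c k := by
    rw [hx0, Complex.ofReal_re]
  refine ⟨?_, hx0re⟩
  -- the linear functional
  set Lf : (Fin N → ℂ) → ℝ := fun y =>
    (y z).re * (q z).re
      + ∑ d ∈ Finset.univ.filter (fun d : Fin N => (d:ℕ) ≠ 0), (y d * (starRingEnd ℂ) (q d)).re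
    with hLf
  -- Lf xstar = ∑ c k
  have hfilter0 : Finset.univ.filter (fun d : Fin N => ¬ ((d:ℕ) ≠ 0)) = {z} := by
    ext d
    simp only [Finset.mem_filter, Finset.mem_univ, true_and, Finset.mem_singleton, not_not]
    constructor
    · intro h; exact Fin.ext (by rw [hz]; exact h)
    · intro h; rw [h, hz]
  have hLfstar : Lf xstar = ∑ k : Fin p, c k := by
    have hterm0 : (xstar z).re * (q z).re = (xstar z * (starRingEnd ℂ) (q z)).re := by
      rw [hx0, re_real_mul, Complex.ofReal_re, Complex.conj_re]
    have hsplit : Lf xstar = ∑ d : Fin N, (xstar d * (starRingEnd ℂ) (q d)).re := by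
      simp only [hLf]
      rw [hterm0, ← Finset.sum_filter_add_sum_filter_not Finset.univ
        (fun d : Fin N => (d:ℕ) ≠ 0) (fun d => (xstar d * (starRingEnd ℂ) (q d)).re),
        hfilter0, Finset.sum_singleton]
      try ring
    rw [hsplit, ← Complex.re_sum]
    have : ∑ d : Fin N, xstar d * (starRingEnd ℂ) (q d)
        = ∑ k : Fin p, (c k : ℂ) * (starRingEnd ℂ) (trigPoly q (τ k)) := by
      rw [Finset.sum_congr rfl fun d _ => by rw [hxd d, Finset.sum_mul]]
      rw [Finset.sum_comm]
      refine Finset.sum_congr rfl fun k _ => ?_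
      rw [trig_eval, map_sum, Finset.mul_sum]
      refine Finset.sum_congr rfl fun d _ => ?_
      rw [_root_.map_mul, ee_conj, neg_neg]
      ring
    rw [this, Complex.re_sum]
    refine Finset.sum_congr rfl fun k _ => ?_
    rw [re_real_mul, Complex.conj_re, h2 k, mul_one]
  -- Lf x = Lf xstar for feasible x
  intro x hfeas hpsd
  have hLfeq : Lf x = Lf xstar := by
    simp only [hLf]
    congr 1
    · by_cases hmem : z ∈ Ω
      · rw [hfeas z hmem]
      · rw [h3 z hmem]
        simp
    · refine Finset.sum_congr rfl fun d _ => ?_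
      by_cases hmem : d ∈ Ω
      · rw [hfeas d hmem]
      · rw [h3 d hmem]
        simp
  -- the vectors
  set v : Fin m → Fin N → ℂ := fun i => Mᴴ *ᵥ u i with hv
  set Tc : Fin N → ℂ := fun d => ∑ i : Fin m,
    ∑ p' ∈ pairsd N d, (starRingEnd ℂ) ((v i) p'.1) * (v i) p'.2 with hTc
  -- coefficient identities
  have hcoef : ∀ d : Fin N, (L:ℂ) * (starRingEnd ℂ) (Tc d)
      = (if (d:ℕ) = 0 then (L:ℂ) else 0) - (L:ℂ)/2 * q d
        - (if (d:ℕ) = 0 then (L:ℂ)/2 * (starRingEnd ℂ) (q d) else 0) := by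
    intro d
    have step1 : (L:ℂ) * (starRingEnd ℂ) (Tc d)
        = ∑ i : Fin m, (L:ℂ) *
            ∑ p' ∈ pairsd N d, (v i) p'.1 * (starRingEnd ℂ) ((v i) p'.2) := by
      rw [hTc]
      simp only [map_sum, _root_.map_mul, Complex.conj_conj, Finset.mul_sum]
    rw [step1]
    rw [Finset.sum_congr rfl fun i _ => (keyA L hLdef hN (v i) d).symm]
    rw [Finset.sum_comm]
    rw [← keyB L hLdef hN q d]
    refine Finset.sum_congr rfl fun j _ => ?_
    rw [← Finset.sum_mul]
    congr 1
    have hmem : ((j:ℕ) : ℝ)/(L:ℝ) ∈ Set.Ico (0:ℝ) 1 := by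
      constructor
      · positivity
      · rw [div_lt_one (by exact_mod_cast hL)]
        exact_mod_cast j.isLt
    have := h4 _ hmem
    rw [show ((1 - (trigPoly q ((j:ℕ)/(L:ℝ))).re : ℝ) : ℂ)
        = ((∑ i : Fin m, ‖trigPoly (Mᴴ *ᵥ u i) ((j:ℕ)/(L:ℝ))‖ ^ 2 : ℝ) : ℂ) by
      exact_mod_cast congrArg Complex.ofReal this]
    push_cast
    rfl
  have hLne : ((L:ℂ)) ≠ 0 := by
    exact_mod_cast hL.ne'
  have hconjTc : ∀ d : Fin N, (starRingEnd ℂ) (Tc d)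
      = (if (d:ℕ) = 0 then (1:ℂ) else 0) - (1:ℂ)/2 * q d
        - (if (d:ℕ) = 0 then (1:ℂ)/2 * (starRingEnd ℂ) (q d) else 0) := by
    intro d
    apply mul_left_cancel₀ hLne
    rw [hcoef d]
    by_cases hd : (d:ℕ) = 0
    · rw [if_pos hd, if_pos hd, if_pos hd, if_pos hd]; ring
    · rw [if_neg hd, if_neg hd, if_neg hd, if_neg hd]; ring
  have hTcd : ∀ d : Fin N, Tc d
      = (if (d:ℕ) = 0 then (1:ℂ) else 0) - (1:ℂ)/2 * (starRingEnd ℂ) (q d)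
        - (if (d:ℕ) = 0 then (1:ℂ)/2 * q d else 0) := by
    intro d
    have h := congrArg (starRingEnd ℂ) (hconjTc d)
    rw [Complex.conj_conj] at h
    rw [h]
    by_cases hd : (d:ℕ) = 0
    · simp only [if_pos hd]
      simp only [map_sub, _root_.map_mul, Complex.conj_conj, _root_.map_one, _root_.map_div₀,
        map_ofNat]
    · simp only [if_neg hd]
      simp only [map_sub, _root_.map_mul, Complex.conj_conj, _root_.map_one, _root_.map_div₀,
        map_ofNat, map_zero]
  -- quadratic form
  have hquad : ∀ i : Fin m, 0 ≤ (star (v i) ⬝ᵥ (Toep x *ᵥ v i)).re := by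
    intro i
    have h0 := hpsd.dotProduct_mulVec_nonneg (u i)
    have heq : star (u i) ⬝ᵥ ((M * Toep x * Mᴴ) *ᵥ u i)
        = star (v i) ⬝ᵥ (Toep x *ᵥ v i) := by
      rw [hv]
      simp only
      rw [← Matrix.mulVec_mulVec, ← Matrix.mulVec_mulVec, Matrix.dotProduct_mulVec (star (u i))]
      congr 1
      rw [Matrix.star_mulVec, Matrix.conjTranspose_conjTranspose]
    rw [heq] at h0
    exact (Complex.le_def.mp h0).1
  have hsum_nonneg : 0 ≤ (∑ i : Fin m, star (v i) ⬝ᵥ (Toep x *ᵥ v i)).re := by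
    rw [Complex.re_sum]
    exact Finset.sum_nonneg fun i _ => hquad i
  -- expansion of the total quadratic form
  have hexp : ∑ i : Fin m, star (v i) ⬝ᵥ (Toep x *ᵥ v i)
      = ∑ d : Fin N, x d * Tc d
        + (starRingEnd ℂ) (∑ d ∈ Finset.univ.filter (fun d : Fin N => (d:ℕ) ≠ 0),
            x d * Tc d) := by
    rw [Finset.sum_congr rfl fun i _ => keyC hN x (v i)]
    rw [Finset.sum_add_distrib, ← map_sum]
    congr 1
    · rw [Finset.sum_comm]
      refine Finset.sum_congr rfl fun d _ => ?_
      rw [hTc, Finset.mul_sum]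
    · congr 1
      rw [Finset.sum_comm]
      refine Finset.sum_congr rfl fun d _ => ?_
      rw [hTc, Finset.mul_sum]
  -- compute the real part
  have hW : ∀ d ∈ Finset.univ.filter (fun d : Fin N => (d:ℕ) ≠ 0),
      x d * Tc d = ((-1/2 : ℝ) : ℂ) * (x d * (starRingEnd ℂ) (q d)) := by
    intro d hd
    have hd' : (d:ℕ) ≠ 0 := by simpa using hd
    rw [hTcd d, if_neg hd', if_neg hd']
    push_cast
    ring
  have hTc0 : x z * Tc z = x z * ((1 - (q z).re : ℝ) : ℂ) := by
    rw [hTcd z, if_pos (by rw [hz]), if_pos (by rw [hz])]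
    congr 1
    rw [show ((1 - (q z).re : ℝ) : ℂ) = 1 - (((q z).re : ℝ) : ℂ) by push_cast; ring]
    rw [show (((q z).re : ℝ) : ℂ) = (q z + (starRingEnd ℂ) (q z))/2 by
      rw [Complex.add_conj]; push_cast; ring]
    ring
  have hre : (∑ i : Fin m, star (v i) ⬝ᵥ (Toep x *ᵥ v i)).re = (x z).re - Lf x := by
    rw [hexp]
    rw [← Finset.sum_filter_add_sum_filter_not Finset.univ
      (fun d : Fin N => (d:ℕ) ≠ 0) (fun d => x d * Tc d), hfilter0, Finset.sum_singleton]
    rw [Finset.sum_congr rfl hW]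
    rw [hTc0]
    rw [Complex.add_re, Complex.add_re, Complex.conj_re]
    rw [← Finset.mul_sum, re_real_mul]
    have hxz : (x z * ((1 - (q z).re : ℝ) : ℂ)).re = (x z).re * (1 - (q z).re) := by
      rw [Complex.mul_re]
      simp [Complex.ofReal_re, Complex.ofReal_im]
    rw [hxz]
    simp only [hLf]
    rw [Complex.re_sum]
    ring
  rw [hre] at hsum_nonneg
  have : Lf x ≤ (x z).re := by linarith
  rw [hLfeq, hLfstar] at this
  rw [hx0re]
  exact this
end

section
/- Let N ≥ 1, let Ω ⊆ {0,…,N−1}, let M ∈ ℂ^{M×N}, and let x* = ∑_{k=1}^p c_k a(τ_k) with p ≥ 1, amplitudes c_k > 0 and pairwise distinct τ_1,…,τ_p ∈ [0,1). Suppose there exist q ∈ ℂ^N and finitely many vectors u_1,…,u_m ∈ ℂ^M satisfying, with Q(τ) = ∑_{n=0}^{N−1} q_n e^{−2πinτ} and P_i(τ) = ∑_{n=0}^{N−1} (M^H u_i)_n e^{−2πinτ}: Re(Q(τ_k)) = 1 for k = 1,…,p; q_j = 0 for j ∉ Ω; and 1 − Re(Q(τ)) = ∑_{i=1}^m |P_i(τ)|²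 for all τ ∈ [0,1). If x̃ = ∑_{k=1}^{p̃} c̃_k a(τ̃_k) with c̃_k > 0 and τ̃_k ∈ [0,1) satisfies x̃_j = x*_j for all j ∈ Ω, M T(x̃) M^H positive semidefinite, and Re(x̃_0) = Re(x*_0), then Re(Q(τ̃_k)) = 1 for every k = 1,…,p̃. -/
open Complex Matrix BigOperators
open scoped ComplexOrder

lemma pair_sum {N P : ℕ} (q : Fin N → ℂ) (c : Fin P → ℝ) (τ : Fin P → ℝ) :
    ∑ n : Fin N, q n * (starRingEnd ℂ) ((∑ k : Fin P, (c k : ℂ) • atom N (τ k)) n)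
      = ∑ k : Fin P, (c k : ℂ) * trigPoly q (τ k) := by
  simp only [Finset.sum_apply, Pi.smul_apply, smul_eq_mul, map_sum, _root_.map_mul,
    Complex.conj_ofReal, atom, Finset.mul_sum, trigPoly]
  rw [Finset.sum_comm]
  refine Finset.sum_congr rfl fun k _ => Finset.sum_congr rfl fun n _ => ?_
  rw [← Complex.exp_conj]
  simp [Complex.conj_I, map_ofNat]
  ring

lemma atom_zero {N : ℕ} (hN : 0 < N) (t : ℝ) : atom N t ⟨0, hN⟩ = 1 := by
  simp [atom]

theorem alternative_solution_atoms_saturate_dual_polynomial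
    (N M' p m ptilde : ℕ) (hN : 0 < N) (hp : 0 < p)
    (Ω : Finset (Fin N))
    (M : Matrix (Fin M') (Fin N) ℂ)
    (τ : Fin p → ℝ) (hτ : ∀ k, τ k ∈ Set.Ico (0 : ℝ) 1)
    (hinj : Function.Injective τ)
    (c : Fin p → ℝ) (hc : ∀ k, 0 < c k)
    (xstar : Fin N → ℂ)
    (hx : xstar = ∑ k : Fin p, (c k : ℂ) • atom N (τ k))
    (q : Fin N → ℂ) (u : Fin m → Fin M' → ℂ)
    (h2 : ∀ k : Fin p, (trigPoly q (τ k)).re = 1)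
    (h3 : ∀ j : Fin N, j ∉ Ω → q j = 0)
    (h4 : ∀ t ∈ Set.Ico (0 : ℝ) 1,
      1 - (trigPoly q t).re = ∑ i : Fin m, ‖trigPoly (Mᴴ *ᵥ u i) t‖ ^ 2)
    (τt : Fin ptilde → ℝ) (hτt : ∀ k, τt k ∈ Set.Ico (0 : ℝ) 1)
    (ct : Fin ptilde → ℝ) (hct : ∀ k, 0 < ct k)
    (xt : Fin N → ℂ)
    (hxt : xt = ∑ k : Fin ptilde, (ct k : ℂ) • atom N (τt k))
    (hfeas : ∀ j ∈ Ω, xt j = xstar j)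
    (hpsd : (M * Toep xt * Mᴴ).PosSemidef)
    (hopt : (xt ⟨0, hN⟩).re = (xstar ⟨0, hN⟩).re) :
    ∀ k : Fin ptilde, (trigPoly q (τt k)).re = 1 := by
  have hle : ∀ k : Fin ptilde, (trigPoly q (τt k)).re ≤ 1 := by
    intro k
    have h := h4 (τt k) (hτt k)
    have h0 : 0 ≤ ∑ i : Fin m, ‖trigPoly (Mᴴ *ᵥ u i) (τt k)‖ ^ 2 :=
      Finset.sum_nonneg fun i _ => sq_nonneg _
    linarith
  have hS1 : ∑ n : Fin N, q n * (starRingEnd ℂ) (xt n)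
      = ∑ n : Fin N, q n * (starRingEnd ℂ) (xstar n) := by
    refine Finset.sum_congr rfl fun n _ => ?_
    by_cases hn : n ∈ Ω
    · rw [hfeas n hn]
    · simp [h3 n hn]
  have hS2 : ∑ n : Fin N, q n * (starRingEnd ℂ) (xt n)
      = ∑ k : Fin ptilde, (ct k : ℂ) * trigPoly q (τt k) := by
    rw [hxt]; exact pair_sum q ct τt
  have hS3 : ∑ n : Fin N, q n * (starRingEnd ℂ) (xstar n)
      = ∑ k : Fin p, (c k : ℂ) * trigPoly q (τ k) := by
    rw [hx]; exact pair_sum q c τ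
  have hre1 : ∑ k : Fin ptilde, ct k * (trigPoly q (τt k)).re = ∑ k : Fin p, c k := by
    have := congrArg Complex.re ((hS2.symm.trans hS1).trans hS3)
    simpa [Complex.re_sum, Complex.re_ofReal_mul, h2] using this
  have hx0 : (xstar ⟨0, hN⟩).re = ∑ k : Fin p, c k := by
    rw [hx]
    simp [Complex.re_sum, atom_zero hN, Complex.re_ofReal_mul]
  have hxt0 : (xt ⟨0, hN⟩).re = ∑ k : Fin ptilde, ct k := by
    rw [hxt]
    simp [Complex.re_sum, atom_zero hN, Complex.re_ofReal_mul]
  have hmass : ∑ k : Fin ptilde, ct k = ∑ k : Fin p, c k := by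
    rw [← hxt0, ← hx0, hopt]
  have hsum0 : ∑ k : Fin ptilde, ct k * (1 - (trigPoly q (τt k)).re) = 0 := by
    simp only [mul_sub, mul_one, Finset.sum_sub_distrib, hre1, hmass, sub_self]
  have hzero := (Finset.sum_eq_zero_iff_of_nonneg
    (fun k _ => mul_nonneg (hct k).le (by linarith [hle k]))).mp hsum0
  intro k
  have := hzero k (Finset.mem_univ k)
  have h1 : (1 - (trigPoly q (τt k)).re) = 0 := by
    rcases mul_eq_zero.mp this with h | h
    · exact absurd h (hct k).ne'
    · exact h
  linarith
end

section
/- Let N ≥ 1, let Ω ⊆ {0,…,N−1}, and let M ∈ ℂ^{M×N}. Let x ∈ ℂ^N be such that M T(x) M^H is positive semidefinite, let S ∈ ℂ^{M×M} be positive semidefinite, and let q ∈ ℂ^N satisfy q_j = 0 for all j ∉ Ω and T*(M^H S M) + K q = e_0. Then Re( ∑_{j ∈ Ω} x_j · conj(q_j) ) ≤ Re(x_0). -/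
open Complex Matrix BigOperators
open scoped ComplexOrder

/-- The adjoint `T*` of the Hermitian Toeplitz operator:
`T*(H)ⱼ = ∑_{ℓ=0}^{N−1−j} H_{j+ℓ,ℓ}`. -/
noncomputable def Tstar {N : ℕ} (H : Matrix (Fin N) (Fin N) ℂ) : Fin N → ℂ :=
  fun j => ∑ ℓ : Fin N,
    if h : (j : ℕ) + (ℓ : ℕ) < N then H ⟨(j : ℕ) + (ℓ : ℕ), h⟩ ℓ else 0

/-- triangular reindexing -/
lemma tri_nat {N : ℕ} (f : ℕ → Fin N → ℂ) :
    ∑ m : Fin N, ∑ n : Fin N, (if (n:ℕ) ≤ (m:ℕ) then f (m:ℕ) n else 0)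
    = ∑ j : Fin N, ∑ ℓ : Fin N, (if (j:ℕ)+(ℓ:ℕ) < N then f ((j:ℕ)+(ℓ:ℕ)) ℓ else 0) := by
  rw [← Finset.sum_product', ← Finset.sum_product']
  rw [← Finset.sum_filter, ← Finset.sum_filter]
  refine Finset.sum_nbij' (fun p => (⟨(p.1:ℕ) - (p.2:ℕ), Nat.lt_of_le_of_lt (Nat.sub_le _ _) p.1.isLt⟩, p.2))
    (fun p => (if h : (p.1:ℕ)+(p.2:ℕ) < N then (⟨(p.1:ℕ)+(p.2:ℕ), h⟩ : Fin N) else p.1, p.2))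
    ?_ ?_ ?_ ?_ ?_
  · rintro ⟨m, n⟩ hm
    simp only [Finset.mem_filter, Finset.mem_product, Finset.mem_univ, true_and] at hm ⊢
    omega
  · rintro ⟨j, ℓ⟩ hj
    simp only [Finset.mem_filter, Finset.mem_product, Finset.mem_univ, true_and] at hj ⊢
    rw [dif_pos hj]
    simp
  · rintro ⟨m, n⟩ hm
    simp only [Finset.mem_filter, Finset.mem_product, Finset.mem_univ, true_and] at hm
    dsimp only
    have h : (m:ℕ) - (n:ℕ) + (n:ℕ) < N := by omega
    rw [dif_pos h]
    simp only [Prod.mk.injEq, Fin.ext_iff]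
    constructor
    · omega
    · trivial
  · rintro ⟨j, ℓ⟩ hj
    simp only [Finset.mem_filter, Finset.mem_product, Finset.mem_univ, true_and] at hj
    dsimp only
    rw [dif_pos hj]
    simp only [Prod.mk.injEq, Fin.ext_iff]
    constructor
    · simp
    · trivial
  · rintro ⟨m, n⟩ hm
    simp only [Finset.mem_filter, Finset.mem_product, Finset.mem_univ, true_and] at hm
    dsimp only
    congr 1
    omega

noncomputable def f1aux {N : ℕ} (H : Matrix (Fin N) (Fin N) ℂ) (x : Fin N → ℂ) : ℕ → Fin N → ℂ :=
  fun a ℓ => if h : a < N then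
      H ℓ ⟨a, h⟩ * x ⟨a - (ℓ:ℕ), Nat.lt_of_le_of_lt (Nat.sub_le _ _) h⟩ else 0

noncomputable def f2aux {N : ℕ} (H : Matrix (Fin N) (Fin N) ℂ) (x : Fin N → ℂ) : ℕ → Fin N → ℂ :=
  fun a ℓ => if h : a < N then
      (if (ℓ:ℕ) = a then 0 else
        H ⟨a, h⟩ ℓ * (starRingEnd ℂ) (x ⟨a - (ℓ:ℕ), Nat.lt_of_le_of_lt (Nat.sub_le _ _) h⟩)) else 0

lemma psd_trace_nonneg {n : ℕ} {A : Matrix (Fin n) (Fin n) ℂ} (hA : A.PosSemidef) :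
    (0:ℂ) ≤ A.trace := by
  rw [Matrix.trace]
  apply Finset.sum_nonneg
  intro i _
  exact hA.diag_nonneg

theorem weak_duality_compressed_ANM
    (N M' : ℕ) (hN : 0 < N)
    (Ω : Finset (Fin N))
    (M : Matrix (Fin M') (Fin N) ℂ)
    (x : Fin N → ℂ) (hx : (M * Toep x * Mᴴ).PosSemidef)
    (S : Matrix (Fin M') (Fin M') ℂ) (hS : S.PosSemidef)
    (q : Fin N → ℂ)
    (hq : ∀ j : Fin N, j ∉ Ω → q j = 0)
    (hfeas : ∀ j : Fin N,
      Tstar (Mᴴ * S * M) j + (if (j : ℕ) = 0 then 1 else (1 / 2 : ℂ)) * q j =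
        (if (j : ℕ) = 0 then 1 else 0)) :
    (∑ j ∈ Ω, x j * (starRingEnd ℂ) (q j)).re ≤ (x ⟨0, hN⟩).re := by
  set H : Matrix (Fin N) (Fin N) ℂ := Mᴴ * S * M with hHdef
  set t : Fin N → ℂ := Tstar H with htdef
  -- H is Hermitian
  have hHerm : H.IsHermitian := by
    rw [hHdef]
    simp [Matrix.IsHermitian, conjTranspose_mul, hS.1.eq, Matrix.mul_assoc]
  have hH : ∀ a b : Fin N, H a b = (starRingEnd ℂ) (H b a) := by
    intro a b
    conv_lhs => rw [← hHerm.eq]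
    rfl
  -- nonnegativity of the trace
  have hnn : (0:ℂ) ≤ (H * Toep x).trace := by
    obtain ⟨B, hB⟩ : ∃ B : Matrix (Fin M') (Fin M') ℂ, S = Bᴴ * B := by
      open scoped MatrixOrder in
      obtain ⟨B, hB⟩ := CStarAlgebra.nonneg_iff_eq_star_mul_self.mp hS.nonneg
      exact ⟨B, hB⟩
    have h1 : (H * Toep x).trace = (B * (M * Toep x * Mᴴ) * Bᴴ).trace := by
      rw [hHdef, hB]
      calc (Mᴴ * (Bᴴ * B) * M * Toep x).trace
          = ((Mᴴ * (Bᴴ * B)) * (M * Toep x)).trace := by rw [Matrix.mul_assoc]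
        _ = ((M * Toep x) * (Mᴴ * (Bᴴ * B))).trace := Matrix.trace_mul_comm _ _
        _ = (((M * Toep x) * Mᴴ) * (Bᴴ * B)).trace := by rw [← Matrix.mul_assoc]
        _ = ((Bᴴ * B) * ((M * Toep x) * Mᴴ)).trace := Matrix.trace_mul_comm _ _
        _ = (Bᴴ * (B * ((M * Toep x) * Mᴴ))).trace := by rw [Matrix.mul_assoc]
        _ = ((B * ((M * Toep x) * Mᴴ)) * Bᴴ).trace := Matrix.trace_mul_comm _ _
        _ = (B * (M * Toep x * Mᴴ) * Bᴴ).trace := by rw [← Matrix.mul_assoc]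
    rw [h1]
    exact psd_trace_nonneg (hx.mul_mul_conjTranspose_same B)
  -- the trace identity
  have ht0 : ∀ j : Fin N, t j
      = (if (j:ℕ) = 0 then 1 else 0) - (if (j:ℕ) = 0 then 1 else (1/2:ℂ)) * q j := by
    intro j
    linear_combination hfeas j
  have hS1 : ∀ j : Fin N,
      (∑ ℓ : Fin N, if (j:ℕ)+(ℓ:ℕ) < N then f1aux H x ((j:ℕ)+(ℓ:ℕ)) ℓ else 0)
        = x j * (starRingEnd ℂ) (t j) := by
    intro j
    rw [htdef]
    unfold Tstar
    rw [map_sum, Finset.mul_sum]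
    refine Finset.sum_congr rfl fun ℓ _ => ?_
    by_cases h : (j:ℕ)+(ℓ:ℕ) < N
    · rw [if_pos h, dif_pos h]
      unfold f1aux
      rw [dif_pos h]
      rw [hH ℓ ⟨(j:ℕ)+(ℓ:ℕ), h⟩]
      rw [show (⟨(j:ℕ)+(ℓ:ℕ) - (ℓ:ℕ), Nat.lt_of_le_of_lt (Nat.sub_le _ _) h⟩ : Fin N) = j from
        Fin.ext (by simp)]
      ring
    · rw [if_neg h, dif_neg h]
      simp
  have hS2 : ∀ j : Fin N,
      (∑ ℓ : Fin N, if (j:ℕ)+(ℓ:ℕ) < N then f2aux H x ((j:ℕ)+(ℓ:ℕ)) ℓ else 0)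
        = (if (j:ℕ) = 0 then 0 else (starRingEnd ℂ) (x j) * t j) := by
    intro j
    by_cases hj : (j:ℕ) = 0
    · rw [if_pos hj]
      apply Finset.sum_eq_zero
      intro ℓ _
      by_cases h : (j:ℕ)+(ℓ:ℕ) < N
      · rw [if_pos h]
        unfold f2aux
        rw [dif_pos h, if_pos (by omega)]
      · rw [if_neg h]
    · rw [if_neg hj, htdef]
      unfold Tstar
      rw [Finset.mul_sum]
      refine Finset.sum_congr rfl fun ℓ _ => ?_
      by_cases h : (j:ℕ)+(ℓ:ℕ) < N
      · rw [if_pos h, dif_pos h]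
        unfold f2aux
        rw [dif_pos h, if_neg (by omega)]
        rw [show (⟨(j:ℕ)+(ℓ:ℕ) - (ℓ:ℕ), Nat.lt_of_le_of_lt (Nat.sub_le _ _) h⟩ : Fin N) = j from
          Fin.ext (by simp)]
        ring
      · rw [if_neg h, dif_neg h]
        simp
  have htrace_eq : (H * Toep x).trace
      = ∑ j : Fin N, x j * (starRingEnd ℂ) (t j)
        + ∑ j : Fin N, (if (j:ℕ) = 0 then 0 else (starRingEnd ℂ) (x j) * t j) := by
    have e1 : (H * Toep x).trace = ∑ n : Fin N, ∑ m : Fin N, H n m * Toep x m n := by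
      simp [Matrix.trace, Matrix.mul_apply, Matrix.diag]
    rw [e1]
    have e2 : (∑ n : Fin N, ∑ m : Fin N, H n m * Toep x m n)
        = (∑ n : Fin N, ∑ m : Fin N, (if (n:ℕ) ≤ (m:ℕ) then f1aux H x (m:ℕ) n else 0))
          + (∑ n : Fin N, ∑ m : Fin N, (if (m:ℕ) ≤ (n:ℕ) then f2aux H x (n:ℕ) m else 0)) := by
      rw [← Finset.sum_add_distrib]
      refine Finset.sum_congr rfl fun n _ => ?_
      rw [← Finset.sum_add_distrib]
      refine Finset.sum_congr rfl fun m _ => ?_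
      unfold Toep f1aux f2aux
      by_cases h1 : (n:ℕ) ≤ (m:ℕ)
      · by_cases h2 : (m:ℕ) ≤ (n:ℕ)
        · have hmn : (m:ℕ) = (n:ℕ) := le_antisymm h2 h1
          rw [if_pos h1, if_pos h1, if_pos h2, dif_pos m.isLt, dif_pos n.isLt,
            if_pos hmn]
          simp [Fin.eta]
        · rw [if_pos h1, if_pos h1, if_neg h2, dif_pos m.isLt]
          simp [Fin.eta]
      · have h2 : (m:ℕ) ≤ (n:ℕ) := le_of_not_ge h1
        rw [if_neg h1, if_neg h1, if_pos h2, dif_pos n.isLt,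
          if_neg (by omega : ¬ (m:ℕ) = (n:ℕ))]
        simp [Fin.eta]
    have eswap : (∑ n : Fin N, ∑ m : Fin N, (if (n:ℕ) ≤ (m:ℕ) then f1aux H x (m:ℕ) n else 0))
        = ∑ m : Fin N, ∑ n : Fin N, (if (n:ℕ) ≤ (m:ℕ) then f1aux H x (m:ℕ) n else 0) := by
      rw [Finset.sum_comm]
    rw [e2, eswap, tri_nat (f1aux H x), tri_nat (f2aux H x)]
    rw [Finset.sum_congr rfl fun j _ => hS1 j, Finset.sum_congr rfl fun j _ => hS2 j]
  -- real part computation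
  have hterm : ∀ j : Fin N,
      (x j * (starRingEnd ℂ) (t j)).re
        + (if (j:ℕ) = 0 then 0 else (starRingEnd ℂ) (x j) * t j).re
      = (if j = (⟨0, hN⟩ : Fin N) then (x ⟨0, hN⟩).re else 0)
        - (x j * (starRingEnd ℂ) (q j)).re := by
    intro j
    rw [ht0 j]
    by_cases hj : (j:ℕ) = 0
    · have hj' : j = ⟨0, hN⟩ := Fin.ext hj
      subst hj'
      simp [mul_sub, Complex.sub_re]
    · have hj' : ¬ j = (⟨0, hN⟩ : Fin N) := by
        simp [Fin.ext_iff]; omega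
      rw [if_neg hj, if_neg hj, if_neg hj, if_neg hj']
      simp only [zero_sub, map_neg, mul_neg, neg_mul, Complex.neg_re, zero_sub]
      rw [show (starRingEnd ℂ) (1/2 * q j) = 1/2 * (starRingEnd ℂ) (q j) by
        rw [_root_.map_mul, show (starRingEnd ℂ) (1/2 : ℂ) = (1/2 : ℂ) from
          Complex.conj_eq_iff_im.mpr (by norm_num)]]
      rw [show x j * (1/2 * (starRingEnd ℂ) (q j)) = (1/2 : ℂ) * (x j * (starRingEnd ℂ) (q j)) by ring]
      rw [show (starRingEnd ℂ) (x j) * (1/2 * q j) = (1/2 : ℂ) * ((starRingEnd ℂ) (x j) * q j) by ring]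
      rw [show (starRingEnd ℂ) (x j) * q j = (starRingEnd ℂ) (x j * (starRingEnd ℂ) (q j)) by
        rw [_root_.map_mul, Complex.conj_conj]]
      rw [show (1/2 : ℂ) = ((1/2 : ℝ) : ℂ) by norm_num]
      rw [Complex.re_ofReal_mul, Complex.re_ofReal_mul, Complex.conj_re]
      ring
  have hre : ((H * Toep x).trace).re
      = (x ⟨0, hN⟩).re - (∑ j : Fin N, x j * (starRingEnd ℂ) (q j)).re := by
    rw [htrace_eq, Complex.add_re, Complex.re_sum, Complex.re_sum, ← Finset.sum_add_distrib]
    rw [Finset.sum_congr rfl fun j _ => hterm j]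
    rw [Finset.sum_sub_distrib, Finset.sum_ite_eq' Finset.univ (⟨0, hN⟩ : Fin N)]
    simp [Complex.re_sum]
  have hΩ : (∑ j ∈ Ω, x j * (starRingEnd ℂ) (q j))
      = ∑ j : Fin N, x j * (starRingEnd ℂ) (q j) :=
    Finset.sum_subset (Finset.subset_univ Ω) (fun j _ hj => by rw [hq j hj]; simp)
  have h0 : 0 ≤ ((H * Toep x).trace).re := by
    have := (Complex.le_def.mp hnn).1
    simpa using this
  rw [hΩ]
  linarith [hre, h0]
end
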